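/- arXiv:0812.1468 — 8 statements merged into one kernel-verified Lean document; each statement's English description precedes it below -/
import Mathlib

section
/- Let {A, G, σ, α} be a crossed system over a monoid G. An element x = Σ_{s∈G} a_s u_s of the crossed product A ⋊_α^σ G lies in the center of A ⋊_α^σ G if and only if (i) a_s σ_s(a) = a a_s for all s ∈ G and a ∈ A, and (ii) for all t, r ∈ G, Σ_{s : st = r} a_s α(s,t) = Σ_{s : ts = r} σ_t(a_s) α(t,s). -/
/-- The multiplication of the crossed product `A ⋊_α^σ G` of a monoid crossed
system, on finitely supported formal sums `G →₀ A`: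
`(a u_s)(b u_t) = a σ_s(b) α(s,t) u_{st}`. -/
noncomputable def crossedMul {A : Type*} [Ring A] {G : Type*} [Monoid G]
    (σ : G → (A →+* A)) (α : G → G → A) (x y : G →₀ A) : G →₀ A :=
  x.sum fun s a => y.sum fun t b => Finsupp.single (s * t) (a * σ s b * α s t)

open scoped Classical in
lemma crossedMul_apply {A : Type*} [Ring A] {G : Type*} [Monoid G]
    (σ : G → (A →+* A)) (α : G → G → A) (x y : G →₀ A) (r : G) :
    crossedMul σ α x y r =
      ∑ s ∈ x.support, ∑ t ∈ y.support,
        if s * t = r then x s * σ s (y t) * α s t else 0 := by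
  rw [crossedMul, Finsupp.sum_apply, Finsupp.sum]
  refine Finset.sum_congr rfl fun s hs => ?_
  rw [Finsupp.sum_apply, Finsupp.sum]
  refine Finset.sum_congr rfl fun t ht => ?_
  rw [Finsupp.single_apply]

open scoped Classical in
lemma finsum_helper {A : Type*} [Ring A] {G : Type*} (x : G →₀ A) (f : G → A)
    (p : G → Prop) (h : ∀ s, x s = 0 → f s = 0) :
    (∑ᶠ (s : G) (_ : p s), f s) = ∑ s ∈ x.support, if p s then f s else 0 := by
  have : (fun s => ∑ᶠ (_ : p s), f s) = fun s => if p s then f s else 0 := by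
    funext s; exact finsum_eq_if
  rw [finsum_congr (fun s => (finsum_eq_if : ∑ᶠ (_ : p s), f s = _))]
  refine finsum_eq_finset_sum_of_support_subset _ fun s hs => ?_
  simp only [Function.mem_support] at hs
  simp only [Finset.coe_sort_coe, Finsupp.mem_support_iff, Finset.mem_coe]
  intro h0
  apply hs
  split <;> simp [h s h0]

section
variable {A : Type*} [Ring A] {G : Type*} [Monoid G]
    (σ : G → (A →+* A)) (α : G → G → A)

lemma crossedMul_zero_right (x : G →₀ A) : crossedMul σ α x 0 = 0 := by
  simp [crossedMul]

lemma crossedMul_zero_left (x : G →₀ A) : crossedMul σ α 0 x = 0 := by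
  simp [crossedMul]

lemma crossedMul_add_right (x y z : G →₀ A) :
    crossedMul σ α x (y + z) = crossedMul σ α x y + crossedMul σ α x z := by
  unfold crossedMul
  rw [← Finsupp.sum_add]
  refine Finsupp.sum_congr fun s hs => ?_
  rw [Finsupp.sum_add_index'] <;> intros <;> simp [mul_add, add_mul, Finsupp.single_add]

lemma crossedMul_add_left (x y z : G →₀ A) :
    crossedMul σ α (y + z) x = crossedMul σ α y x + crossedMul σ α z x := by
  unfold crossedMul
  rw [Finsupp.sum_add_index'] <;> intros <;>
    simp [mul_add, add_mul, Finsupp.single_add, ← Finsupp.sum_add]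

end

/-- an element `x = Σ a_s u_s` of a monoid crossed product is central
iff (i) `a_s σ_s(a) = a a_s` for all `s, a` and (ii) for all `t, r`,
`Σ_{st=r} a_s α(s,t) = Σ_{ts=r} σ_t(a_s) α(t,s)`. -/
theorem center_monoid_crossed_product
    {A : Type*} [Ring A] {G : Type*} [Monoid G]
    (σ : G → (A →+* A)) (α : G → G → A)
    (hσ1 : σ 1 = RingHom.id A)
    (hα1r : ∀ s, α s 1 = 1) (hα1l : ∀ s, α 1 s = 1)
    (hcoc : ∀ s t r, α s t * α (s * t) r = σ s (α t r) * α s (t * r))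
    (htw : ∀ s t a, σ s (σ t a) * α s t = α s t * σ (s * t) a)
    (x : G →₀ A) :
    (∀ y, crossedMul σ α x y = crossedMul σ α y x) ↔
      ((∀ s a, x s * σ s a = a * x s) ∧
        ∀ t r, (∑ᶠ (s : G) (_ : s * t = r), x s * α s t)
          = ∑ᶠ (s : G) (_ : t * s = r), σ t (x s) * α t s) := by
  classical
  constructor
  · intro h
    constructor
    · intro s a
      by_cases ha : a = 0
      · simp [ha]
      have hy := Finsupp.ext_iff.mp (h (Finsupp.single 1 a)) s
      rw [crossedMul_apply, crossedMul_apply,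
        Finsupp.support_single_ne_zero _ ha] at hy
      simp only [Finset.sum_singleton, Finsupp.single_eq_same, mul_one, one_mul,
        hα1r, hα1l, hσ1, RingHom.id_apply] at hy
      have L : ∑ u ∈ x.support, (if u = s then x u * σ u a else 0) = x s * σ s a := by
        rw [Finset.sum_ite_eq' x.support s (fun u => x u * σ u a)]
        split
        · rfl
        · rw [Finsupp.notMem_support_iff.mp ‹_›, zero_mul]
      have R : ∑ u ∈ x.support, (if u = s then a * x u else 0) = a * x s := by
        rw [Finset.sum_ite_eq' x.support s (fun u => a * x u)]
        split
        · rfl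
        · rw [Finsupp.notMem_support_iff.mp ‹_›, mul_zero]
      rw [← L, ← R]
      exact hy
    · intro t r
      rcases subsingleton_or_nontrivial A with hA | hA
      · exact Subsingleton.elim _ _
      have hy := Finsupp.ext_iff.mp (h (Finsupp.single t 1)) r
      rw [crossedMul_apply, crossedMul_apply,
        Finsupp.support_single_ne_zero _ (one_ne_zero : (1:A) ≠ 0)] at hy
      simp only [Finset.sum_singleton, Finsupp.single_eq_same, map_one, mul_one,
        one_mul] at hy
      rw [finsum_helper x _ _ (fun s hs => by rw [hs, zero_mul]),
        finsum_helper x _ _ (fun s hs => by rw [hs, map_zero, zero_mul])]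
      exact hy
  · rintro ⟨h1, h2⟩ y
    induction y using Finsupp.induction with
    | zero => rw [crossedMul_zero_right, crossedMul_zero_left]
    | single_add t b y ht hb ih =>
      rw [crossedMul_add_right, crossedMul_add_left, ih]
      congr 1
      ext r
      rw [crossedMul_apply, crossedMul_apply,
        Finsupp.support_single_ne_zero _ hb]
      simp only [Finset.sum_singleton, Finsupp.single_eq_same]
      have key := h2 t r
      rw [finsum_helper x _ _ (fun s hs => by rw [hs, zero_mul]),
        finsum_helper x _ _ (fun s hs => by rw [hs, map_zero, zero_mul])] at key
      have L : ∀ s ∈ x.support, (if s * t = r then x s * σ s b * α s t else 0)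
          = b * (if s * t = r then x s * α s t else 0) := fun s _ => by
        split
        · rw [h1 s b, mul_assoc]
        · rw [mul_zero]
      have R : ∀ u ∈ x.support, (if t * u = r then b * σ t (x u) * α t u else 0)
          = b * (if t * u = r then σ t (x u) * α t u else 0) := fun u _ => by
        split
        · rw [mul_assoc]
        · rw [mul_zero]
      rw [Finset.sum_congr rfl L, Finset.sum_congr rfl R, ← Finset.mul_sum,
        ← Finset.mul_sum, key]
end

section
/- Let {A, G, σ, α} be a crossed system where G is an abelian cancellable monoid, α is symmetric (α(s,t) = α(t,s) for all s,t ∈ G), and no α(s,t) is a zero divisor in A. Then an element x = Σ_{s∈G} a_s u_s lies in the center of A ⋊_α^σ G if and only if (i) a_s σ_s(a) = a a_s for all s ∈ G, a ∈ A, and (ii) each a_s is fixed by σ_t for every t ∈ G (i.e. a_s ∈ A^G). -/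
private lemma sum_single_apply_mul {A : Type*} [Ring A] {G : Type*} [CommMonoid G]
    [IsCancelMul G] (x : G →₀ A) (t s₀ : G) (c : G → A → A) (hc : ∀ s, c s 0 = 0) :
    (x.sum fun s a => Finsupp.single (s * t) (c s a)) (s₀ * t) = c s₀ (x s₀) := by
  classical
  rw [Finsupp.sum_apply, Finsupp.sum_eq_single s₀]
  · simp
  · intro s hs hne
    rw [Finsupp.single_apply, if_neg]
    intro h; exact hne (mul_right_cancel h)
  · simp [hc]

/-- if `G` is an abelian cancellable monoid, `α` is symmetric and no
`α(s,t)` is a zero divisor, then `x = Σ a_s u_s` is central in `A ⋊_α^σ G` iff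
(i) `a_s σ_s(a) = a a_s` for all `s, a` and (ii) every `a_s` is fixed by all
`σ_t` (i.e. `a_s ∈ A^G`). -/
theorem center_crossed_product_abelian_cancellable
    {A : Type*} [Ring A] {G : Type*} [CommMonoid G] [IsCancelMul G]
    (σ : G → (A →+* A)) (α : G → G → A)
    (hσ1 : σ 1 = RingHom.id A)
    (hα1r : ∀ s, α s 1 = 1) (hα1l : ∀ s, α 1 s = 1)
    (hcoc : ∀ s t r, α s t * α (s * t) r = σ s (α t r) * α s (t * r))
    (htw : ∀ s t a, σ s (σ t a) * α s t = α s t * σ (s * t) a)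
    (hsym : ∀ s t, α s t = α t s)
    (hreg : ∀ s t, ∀ b : A, (α s t * b = 0 → b = 0) ∧ (b * α s t = 0 → b = 0))
    (x : G →₀ A) :
    (∀ y, crossedMul σ α x y = crossedMul σ α y x) ↔
      ((∀ s a, x s * σ s a = a * x s) ∧ ∀ s t, σ t (x s) = x s) := by
  classical
  constructor
  · intro h
    have key : ∀ s t (b : A), x s * σ s b * α s t = b * σ t (x s) * α t s := by
      intro s t b
      have h' := h (Finsupp.single t b)
      have hL : crossedMul σ α x (Finsupp.single t b) =
          x.sum fun s a => Finsupp.single (s * t) (a * σ s b * α s t) := by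
        unfold crossedMul
        refine Finsupp.sum_congr fun s _ => ?_
        rw [Finsupp.sum_single_index]
        simp
      have hR : crossedMul σ α (Finsupp.single t b) x =
          x.sum fun s a => Finsupp.single (s * t) (b * σ t a * α t s) := by
        unfold crossedMul
        rw [Finsupp.sum_single_index]
        · refine Finsupp.sum_congr fun s _ => ?_
          rw [mul_comm t s]
        · simp
      rw [hL, hR] at h'
      have := DFunLike.congr_fun h' (s * t)
      rwa [sum_single_apply_mul x t s (fun s a => a * σ s b * α s t) (by simp),
        sum_single_apply_mul x t s (fun s a => b * σ t a * α t s) (by simp)] at this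
    have h1 : ∀ s a, x s * σ s a = a * x s := by
      intro s a
      have k := key s 1 a
      simpa [hσ1, hα1r, hα1l] using k
    refine ⟨h1, fun s t => ?_⟩
    have k := key s t 1
    rw [map_one, mul_one, one_mul, hsym t s] at k
    have hz : (σ t (x s) - x s) * α s t = 0 := by
      rw [sub_mul, k, sub_self]
    have := (hreg s t _).2 hz
    exact sub_eq_zero.mp this
  · rintro ⟨h1, h2⟩ y
    unfold crossedMul
    conv_rhs => rw [Finsupp.sum_comm]
    refine Finsupp.sum_congr fun s _ => Finsupp.sum_congr fun t _ => ?_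
    rw [mul_comm t s, h2 s t, hsym t s, h1 s (y t)]
end

section
/- Let A ⋊^σ G be a skew monoid ring (all α(s,t) = 1) where G is an abelian cancellable monoid. Then Σ_{s∈G} a_s u_s is central if and only if a_s σ_s(a) = a a_s for all s ∈ G and a ∈ A, and each a_s lies in A^G. -/
/-- The multiplication of a skew monoid ring `A ⋊^σ G` (all `α(s,t) = 1`) on
finitely supported formal sums: `(a u_s)(b u_t) = a σ_s(b) u_{st}`. -/
noncomputable def skewMul {A : Type*} [Ring A] {G : Type*} [Monoid G]
    (σ : G → (A →+* A)) (x y : G →₀ A) : G →₀ A :=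
  x.sum fun s a => y.sum fun t b => Finsupp.single (s * t) (a * σ s b)

private lemma sum_single_right_apply {A : Type*} [Ring A] {G : Type*} [CommMonoid G]
    [IsCancelMul G] (x : G →₀ A) (F : G → A → A) (s t : G)
    (h0 : ∀ s', F s' 0 = 0) :
    (x.sum fun s' a => Finsupp.single (s' * t) (F s' a)) (s * t) = F s (x s) := by
  classical
  rw [Finsupp.sum_apply]
  have : (x.sum fun s' a => (Finsupp.single (s' * t) (F s' a)) (s * t))
      = x.sum fun s' a => if s' = s then F s' a else 0 := by
    apply Finsupp.sum_congr
    intro s' _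
    rw [Finsupp.single_apply]
    congr 1
    simp [mul_left_cancel_iff, mul_right_cancel_iff]
  rw [this, Finsupp.sum_ite_eq']
  split
  · rfl
  · next h => rw [Finsupp.notMem_support_iff.mp h, h0]

private lemma sum_single_left_apply {A : Type*} [Ring A] {G : Type*} [CommMonoid G]
    [IsCancelMul G] (x : G →₀ A) (F : G → A → A) (s t : G)
    (h0 : ∀ s', F s' 0 = 0) :
    (x.sum fun s' a => Finsupp.single (t * s') (F s' a)) (s * t) = F s (x s) := by
  have : (x.sum fun s' a => Finsupp.single (t * s') (F s' a))
      = x.sum fun s' a => Finsupp.single (s' * t) (F s' a) := by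
    apply Finsupp.sum_congr
    intro s' _
    rw [mul_comm]
  rw [this, sum_single_right_apply x F s t h0]

/-- in a skew monoid ring `A ⋊^σ G` over an abelian cancellable
monoid `G`, an element `Σ a_s u_s` is central iff `a_s σ_s(a) = a a_s` for all
`s, a` and every `a_s` lies in `A^G`. -/
theorem center_skew_monoid_ring
    {A : Type*} [Ring A] {G : Type*} [CommMonoid G] [IsCancelMul G]
    (σ : G → (A →+* A))
    (hσ1 : σ 1 = RingHom.id A)
    (hσmul : ∀ s t, σ (s * t) = (σ s).comp (σ t))
    (x : G →₀ A) :
    (∀ y, skewMul σ x y = skewMul σ y x) ↔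
      ((∀ s a, x s * σ s a = a * x s) ∧ ∀ s t, σ t (x s) = x s) := by
  have key : (∀ y, skewMul σ x y = skewMul σ y x) →
      ∀ s t b, x s * σ s b = b * σ t (x s) := by
    intro h s t b
    have h1 := h (Finsupp.single t b)
    have e1 : skewMul σ x (Finsupp.single t b)
        = x.sum fun s' a => Finsupp.single (s' * t) (a * σ s' b) := by
      unfold skewMul
      apply Finsupp.sum_congr
      intro s' _
      rw [Finsupp.sum_single_index]
      simp
    have e2 : skewMul σ (Finsupp.single t b) x
        = x.sum fun s' a => Finsupp.single (t * s') (b * σ t a) := by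
      unfold skewMul
      rw [Finsupp.sum_single_index]
      simp
    rw [e1, e2] at h1
    have := congrFun (congrArg DFunLike.coe h1) (s * t)
    rwa [sum_single_right_apply x (fun s' a => a * σ s' b) s t (by simp),
      sum_single_left_apply x (fun _ a => b * σ t a) s t (by simp)] at this
  constructor
  · intro h
    refine ⟨fun s a => ?_, fun s t => ?_⟩
    · have := key h s 1 a
      rwa [hσ1, RingHom.id_apply] at this
    · have := key h s t 1
      rw [map_one, mul_one, one_mul] at this
      exact this.symm
  · rintro ⟨h1, h2⟩ y
    unfold skewMul
    rw [Finsupp.sum_comm]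
    apply Finsupp.sum_congr
    intro s _
    apply Finsupp.sum_congr
    intro t _
    congr 1
    · rw [mul_comm]
    · rw [h1, h2]
end

section
/- Let A ⋊_α^σ G be a category crossed product over a small category G with finitely many objects. If all α(s,t) are nonzero and A ⋊_α^σ G is commutative, then: (ii) G is the disjoint union of the endomorphism monoids G_e, e ∈ ob(G) (i.e. every morphism s satisfies d(s) = c(s)), and each G_e is abelian; (iii) each σ_s with d(s) = c(s) = e is the identity on A_e; (iv) A = ⊕_e A_e is commutative; (v) α is symmetric, i.e. α(s,t) = α(t,s) whenever d(s)=c(s)=d(t)=c(t). -/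
open CategoryTheory

/-- The type of morphisms of a category `G`, bundled with domain and codomain. -/
abbrev CMor (G : Type*) [Category G] := Σ e f : G, e ⟶ f

/-- Transport along an equality of objects, as a ring homomorphism. -/
def castRH {G : Type*} (A : G → Type*) [∀ e, Ring (A e)]
    {e f : G} (h : e = f) : A e →+* A f := by subst h; exact RingHom.id _

/-- The carrier of the category crossed product `A ⋊_α^σ G`: finitely supported
formal sums `Σ_s a_s u_s` with `a_s ∈ A_{c(s)}`. -/
abbrev CP {G : Type*} [Category G] (A : G → Type*) [∀ e, Ring (A e)] :=
  Π₀ p : CMor G, A p.2.1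

open Classical in
/-- The multiplication of the category crossed product:
`(a u_s)(b u_t) = a σ_s(b) α(s,t) u_{st}` when `d(s) = c(t)`, else `0`. -/
noncomputable def catMul {G : Type*} [Category G] {A : G → Type*} [∀ e, Ring (A e)]
    (σ : ∀ e f : G, (e ⟶ f) → (A e →+* A f))
    (α : ∀ e f g : G, (f ⟶ g) → (e ⟶ f) → A g)
    (x y : CP A) : CP A :=
  x.sum fun p a => y.sum fun q b =>
    if h : q.2.1 = p.1 then
      DFinsupp.single (⟨q.1, p.2.1, (q.2.2 ≫ eqToHom h) ≫ p.2.2⟩ : CMor G)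
        (a * σ p.1 p.2.1 p.2.2 (castRH A h b) * α q.1 p.1 p.2.1 p.2.2 (q.2.2 ≫ eqToHom h))
    else 0

open Classical in
/-- `a u_s`, the formal sum supported on a single morphism. -/
noncomputable def catSingle {G : Type*} [Category G] {A : G → Type*} [∀ e, Ring (A e)]
    (p : CMor G) (a : A p.2.1) : CP A := DFinsupp.single p a



lemma castRH_rfl {G : Type*} (A : G → Type*) [∀ e, Ring (A e)] (e : G) :
    castRH A (rfl : e = e) = RingHom.id (A e) := rfl

open Classical in
lemma catMul_single {G : Type*} [Category G] {A : G → Type*} [∀ e, Ring (A e)]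
    (σ : ∀ e f : G, (e ⟶ f) → (A e →+* A f))
    (α : ∀ e f g : G, (f ⟶ g) → (e ⟶ f) → A g)
    (p q : CMor G) (a : A p.2.1) (b : A q.2.1) :
    catMul σ α (catSingle p a) (catSingle q b) =
      if h : q.2.1 = p.1 then
        DFinsupp.single (⟨q.1, p.2.1, (q.2.2 ≫ eqToHom h) ≫ p.2.2⟩ : CMor G)
          (a * σ p.1 p.2.1 p.2.2 (castRH A h b) * α q.1 p.1 p.2.1 p.2.2 (q.2.2 ≫ eqToHom h))
      else 0 := by
  unfold catMul catSingle
  rw [DFinsupp.sum_single_index, DFinsupp.sum_single_index]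
  · split <;> simp
  · simp [DFinsupp.sum]

/-- if all `α(s,t)` are nonzero and the category crossed product
`A ⋊_α^σ G` (over a small category with finitely many objects) is commutative,
then every morphism of `G` is an endomorphism and each monoid `G_e` is abelian,
each `σ_s` with `d(s) = c(s)` is the identity, each `A_e` is commutative, and
`α` is symmetric. -/
theorem commutative_category_crossed_product_necessary
    {G : Type*} [Category G] [Finite G] {A : G → Type*} [∀ e, Ring (A e)]
    (σ : ∀ e f : G, (e ⟶ f) → (A e →+* A f))
    (α : ∀ e f g : G, (f ⟶ g) → (e ⟶ f) → A g)
    (hσ1 : ∀ e : G, σ e e (𝟙 e) = RingHom.id (A e))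
    (hα1r : ∀ (e f : G) (s : e ⟶ f), α e e f s (𝟙 e) = 1)
    (hα1l : ∀ (e f : G) (s : e ⟶ f), α e f f (𝟙 f) s = 1)
    (hcoc : ∀ (e f g h : G) (s : g ⟶ h) (t : f ⟶ g) (r : e ⟶ f),
      α f g h s t * α e f h (t ≫ s) r = σ g h s (α e f g t r) * α e g h s (r ≫ t))
    (htw : ∀ (e f g : G) (s : f ⟶ g) (t : e ⟶ f) (a : A e),
      σ f g s (σ e f t a) * α e f g s t = α e f g s t * σ e g (t ≫ s) a)
    (hαne : ∀ (e f g : G) (s : f ⟶ g) (t : e ⟶ f), α e f g s t ≠ 0)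
    (hcomm : ∀ x y : CP A, catMul σ α x y = catMul σ α y x) :
    (∀ (e f : G), (e ⟶ f) → e = f) ∧
    (∀ (e : G) (s t : e ⟶ e), s ≫ t = t ≫ s) ∧
    (∀ (e : G) (s : e ⟶ e), σ e e s = RingHom.id (A e)) ∧
    (∀ (e : G) (a b : A e), a * b = b * a) ∧
    (∀ (e : G) (s t : e ⟶ e), α e e e s t = α e e e t s) := by
  classical
  refine ⟨?_, ?_, ?_, ?_, ?_⟩
  · intro e f s
    by_contra hne
    have h := hcomm (catSingle ⟨e,f,s⟩ 1) (catSingle ⟨e,e,𝟙 e⟩ 1)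
    rw [catMul_single, catMul_single, dif_pos rfl, dif_neg (by simpa using Ne.symm hne)] at h
    simp only [castRH_rfl, RingHom.id_apply, map_one, one_mul, mul_one, eqToHom_refl,
      Category.comp_id, Category.id_comp, hα1r] at h
    rw [DFinsupp.single_eq_zero] at h
    exact hαne e e f s (𝟙 e) (by rw [hα1r]; exact h)
  · intro e s t
    have h := hcomm (catSingle ⟨e,e,s⟩ 1) (catSingle ⟨e,e,t⟩ 1)
    rw [catMul_single, catMul_single, dif_pos rfl, dif_pos rfl] at h
    simp only [castRH_rfl, RingHom.id_apply, map_one, one_mul, mul_one, eqToHom_refl,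
      Category.comp_id] at h
    rcases (DFinsupp.single_eq_single_iff _ _ _ _).mp h with ⟨hidx, _⟩ | ⟨h1, _⟩
    · simpa using hidx.symm
    · exact absurd h1 (hαne e e e s t)
  · intro e s
    ext a
    have h := hcomm (catSingle ⟨e,e,s⟩ 1) (catSingle ⟨e,e,𝟙 e⟩ a)
    rw [catMul_single, catMul_single, dif_pos rfl, dif_pos rfl] at h
    simp only [castRH_rfl, RingHom.id_apply, map_one, one_mul, mul_one, eqToHom_refl,
      Category.comp_id, Category.id_comp, hα1r, hα1l, hσ1] at h
    rcases (DFinsupp.single_eq_single_iff _ _ _ _).mp h with ⟨_, hval⟩ | ⟨h1, h2⟩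
    · simpa using eq_of_heq hval
    · simp [h1, h2]
  · intro e a b
    have h := hcomm (catSingle ⟨e,e,𝟙 e⟩ a) (catSingle ⟨e,e,𝟙 e⟩ b)
    rw [catMul_single, catMul_single, dif_pos rfl, dif_pos rfl] at h
    simp only [castRH_rfl, RingHom.id_apply, map_one, one_mul, mul_one, eqToHom_refl,
      Category.comp_id, Category.id_comp, hα1r, hσ1] at h
    rcases (DFinsupp.single_eq_single_iff _ _ _ _).mp h with ⟨_, hval⟩ | ⟨h1, h2⟩
    · exact eq_of_heq hval
    · rw [h1, h2]
  · intro e s t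
    have h := hcomm (catSingle ⟨e,e,s⟩ 1) (catSingle ⟨e,e,t⟩ 1)
    rw [catMul_single, catMul_single, dif_pos rfl, dif_pos rfl] at h
    simp only [castRH_rfl, RingHom.id_apply, map_one, one_mul, mul_one, eqToHom_refl,
      Category.comp_id] at h
    rcases (DFinsupp.single_eq_single_iff _ _ _ _).mp h with ⟨hidx, hval⟩ | ⟨h1, _⟩
    · exact eq_of_heq hval
    · exact absurd h1 (hαne e e e s t)
end

section
/- Let A ⋊_α^σ G be a category crossed product over a small category G. Suppose (ii) every morphism of G is an endomorphism (d(s) = c(s) for all s) and each monoid G_e is abelian; (iii) each σ_s is the identity on A_{c(s)}; (iv) each A_e is commutative; and (v) α is symmetric on each G_e. Then A ⋊_α^σ G is commutative. -/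
open CategoryTheory

open Classical in
theorem catMul_term_comm {G : Type*} [Category G] {A : G → Type*} [∀ e, CommRing (A e)]
    (σ : ∀ e f : G, (e ⟶ f) → (A e →+* A f))
    (α : ∀ e f g : G, (f ⟶ g) → (e ⟶ f) → A g)
    (hendo : ∀ (e f : G), (e ⟶ f) → e = f)
    (habel : ∀ (e : G) (s t : e ⟶ e), s ≫ t = t ≫ s)
    (hσid : ∀ (e : G) (s : e ⟶ e), σ e e s = RingHom.id (A e))
    (hsym : ∀ (e : G) (s t : e ⟶ e), α e e e s t = α e e e t s)
    (p q : CMor G) (a : A p.2.1) (b : A q.2.1) :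
    (if h : q.2.1 = p.1 then
      DFinsupp.single (⟨q.1, p.2.1, (q.2.2 ≫ eqToHom h) ≫ p.2.2⟩ : CMor G)
        (a * σ p.1 p.2.1 p.2.2 (castRH A h b) * α q.1 p.1 p.2.1 p.2.2 (q.2.2 ≫ eqToHom h))
    else 0 : CP A)
    = (if h : p.2.1 = q.1 then
      DFinsupp.single (⟨p.1, q.2.1, (p.2.2 ≫ eqToHom h) ≫ q.2.2⟩ : CMor G)
        (b * σ q.1 q.2.1 q.2.2 (castRH A h a) * α p.1 q.1 q.2.1 q.2.2 (p.2.2 ≫ eqToHom h))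
    else 0 : CP A) := by
  obtain ⟨e1, f1, s⟩ := p
  obtain ⟨e2, f2, t⟩ := q
  dsimp at a b ⊢
  obtain rfl := hendo _ _ s
  obtain rfl := hendo _ _ t
  by_cases h : e2 = e1
  · subst h
    rw [dif_pos rfl, dif_pos rfl]
    simp only [eqToHom_refl, Category.comp_id, castRH, RingHom.id_apply]
    rw [hσid, hσid]
    simp only [RingHom.id_apply]
    have hst : (t ≫ 𝟙 e2) ≫ s = (s ≫ 𝟙 e2) ≫ t := by
      simp only [Category.comp_id]; exact habel _ t s
    rw [hst, hsym _ s t, mul_comm a b]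
  · rw [dif_neg h, dif_neg (fun hh => h hh.symm)]

/-- if every morphism of `G` is an endomorphism, each monoid `G_e`
is abelian, each `σ_s` is the identity, each `A_e` is commutative and `α` is
symmetric on each `G_e`, then the category crossed product `A ⋊_α^σ G` is
commutative. -/
theorem commutative_category_crossed_product_sufficient
    {G : Type*} [Category G] {A : G → Type*} [∀ e, CommRing (A e)]
    (σ : ∀ e f : G, (e ⟶ f) → (A e →+* A f))
    (α : ∀ e f g : G, (f ⟶ g) → (e ⟶ f) → A g)
    (hσ1 : ∀ e : G, σ e e (𝟙 e) = RingHom.id (A e))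
    (hα1r : ∀ (e f : G) (s : e ⟶ f), α e e f s (𝟙 e) = 1)
    (hα1l : ∀ (e f : G) (s : e ⟶ f), α e f f (𝟙 f) s = 1)
    (hcoc : ∀ (e f g h : G) (s : g ⟶ h) (t : f ⟶ g) (r : e ⟶ f),
      α f g h s t * α e f h (t ≫ s) r = σ g h s (α e f g t r) * α e g h s (r ≫ t))
    (htw : ∀ (e f g : G) (s : f ⟶ g) (t : e ⟶ f) (a : A e),
      σ f g s (σ e f t a) * α e f g s t = α e f g s t * σ e g (t ≫ s) a)
    (hendo : ∀ (e f : G), (e ⟶ f) → e = f)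
    (habel : ∀ (e : G) (s t : e ⟶ e), s ≫ t = t ≫ s)
    (hσid : ∀ (e : G) (s : e ⟶ e), σ e e s = RingHom.id (A e))
    (hsym : ∀ (e : G) (s t : e ⟶ e), α e e e s t = α e e e t s) :
    ∀ x y : CP A, catMul σ α x y = catMul σ α y x := by
  intro x y
  classical
  unfold catMul
  rw [DFinsupp.sum_comm]
  congr 1
  funext q b
  congr 1
  funext p a
  exact catMul_term_comm σ α hendo habel hσid hsym p q a b
end

section
/- Let A ⋊_α^σ G be a category crossed product. The commutant of A = ⊕_e A_e u_e in A ⋊_α^σ G equals the set of elements Σ_{s∈G} a_s u_s such that a_s = 0 whenever d(s) ≠ c(s), and a_s σ_s(a) = a a_s for all s with d(s) = c(s) and all a ∈ A_{d(s)}. -/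
open CategoryTheory

open Classical in
lemma sum_single_eval {G : Type*} [Category G] {A : G → Type*} [∀ e, Ring (A e)]
    (x : CP A) (v : ∀ p : CMor G, A p.2.1 → A p.2.1)
    (hv : ∀ p, v p 0 = 0) (r : CMor G) :
    (x.sum fun p ap => DFinsupp.single p (v p ap)) r = v r (x r) := by
  rw [DFinsupp.sum_apply]
  unfold DFinsupp.sum
  rw [Finset.sum_eq_single r]
  · simp
  · intro b _ hb
    simp [DFinsupp.single_apply, hb]
  · intro h
    rw [DFinsupp.notMem_support_iff] at h
    simp [h, hv]

open Classical in
lemma mul_single_eq {G : Type*} [Category G] {A : G → Type*} [∀ e, Ring (A e)]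
    (σ : ∀ e f : G, (e ⟶ f) → (A e →+* A f))
    (α : ∀ e f g : G, (f ⟶ g) → (e ⟶ f) → A g)
    (hα1r : ∀ (e f : G) (s : e ⟶ f), α e e f s (𝟙 e) = 1)
    (x : CP A) (e : G) (a : A e) :
    catMul σ α x (catSingle (A := A) ⟨e, e, 𝟙 e⟩ a)
      = x.sum fun p ap => DFinsupp.single p
          (if h : p.1 = e then ap * σ p.1 p.2.1 p.2.2 (castRH A h.symm a) else 0) := by
  unfold catMul catSingle
  refine congrArg _ (funext fun p => funext fun ap => ?_)
  rw [DFinsupp.sum_single_index]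
  · obtain ⟨d, c, f⟩ := p
    by_cases hd : e = d
    · subst hd
      rw [dif_pos rfl, dif_pos rfl]
      dsimp only
      simp only [eqToHom_refl, Category.comp_id, Category.id_comp, hα1r, mul_one]
      rw [show (𝟙 e ≫ 𝟙 e) ≫ f = f by simp]
    · rw [dif_neg hd, dif_neg (fun h => hd h.symm), DFinsupp.single_zero]
  · dsimp only
    split
    · simp
    · rfl

open Classical in
lemma single_mul_eq {G : Type*} [Category G] {A : G → Type*} [∀ e, Ring (A e)]
    (σ : ∀ e f : G, (e ⟶ f) → (A e →+* A f))
    (α : ∀ e f g : G, (f ⟶ g) → (e ⟶ f) → A g)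
    (hσ1 : ∀ e : G, σ e e (𝟙 e) = RingHom.id (A e))
    (hα1l : ∀ (e f : G) (s : e ⟶ f), α e f f (𝟙 f) s = 1)
    (x : CP A) (e : G) (a : A e) :
    catMul σ α (catSingle (A := A) ⟨e, e, 𝟙 e⟩ a) x
      = x.sum fun q bq => DFinsupp.single q
          (if h : q.2.1 = e then castRH A h.symm a * bq else 0) := by
  unfold catMul catSingle
  rw [DFinsupp.sum_single_index]
  · refine congrArg _ (funext fun q => funext fun bq => ?_)
    obtain ⟨d, c, f⟩ := q
    by_cases hc : c = e
    · subst hc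
      rw [dif_pos rfl, dif_pos rfl]
      dsimp only
      simp only [eqToHom_refl, Category.comp_id, Category.id_comp, hα1l, hσ1, mul_one,
        RingHom.id_apply]
      rw [show (f ≫ 𝟙 c) ≫ 𝟙 c = f by simp]
      rfl
    · rw [dif_neg hc, dif_neg hc, DFinsupp.single_zero]
  · refine (DFinsupp.sum_eq_zero fun q => ?_).trans rfl
    dsimp only
    split
    · simp
    · rfl


/-- the commutant of the coefficient ring `A = ⊕_e A_e u_e` in a
category crossed product `A ⋊_α^σ G` consists precisely of the elements
`Σ a_s u_s` with `a_s = 0` whenever `d(s) ≠ c(s)` and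
`a_s σ_s(a) = a a_s` for all `s` with `d(s) = c(s)` and all `a ∈ A_{d(s)}`. -/
theorem commutant_coefficient_ring
    {G : Type*} [CategoryTheory.Category G] {A : G → Type*} [∀ e, Ring (A e)]
    (σ : ∀ e f : G, (e ⟶ f) → (A e →+* A f))
    (α : ∀ e f g : G, (f ⟶ g) → (e ⟶ f) → A g)
    (hσ1 : ∀ e : G, σ e e (𝟙 e) = RingHom.id (A e))
    (hα1r : ∀ (e f : G) (s : e ⟶ f), α e e f s (𝟙 e) = 1)
    (hα1l : ∀ (e f : G) (s : e ⟶ f), α e f f (𝟙 f) s = 1)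
    (hcoc : ∀ (e f g h : G) (s : g ⟶ h) (t : f ⟶ g) (r : e ⟶ f),
      α f g h s t * α e f h (t ≫ s) r = σ g h s (α e f g t r) * α e g h s (r ≫ t))
    (htw : ∀ (e f g : G) (s : f ⟶ g) (t : e ⟶ f) (a : A e),
      σ f g s (σ e f t a) * α e f g s t = α e f g s t * σ e g (t ≫ s) a)
    (x : CP A) :
    (∀ (e : G) (a : A e),
        catMul σ α x (catSingle (A := A) ⟨e, e, 𝟙 e⟩ a)
          = catMul σ α (catSingle (A := A) ⟨e, e, 𝟙 e⟩ a) x) ↔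
      ((∀ p : CMor G, p.1 ≠ p.2.1 → x p = 0) ∧
        ∀ (e : G) (s : e ⟶ e) (a : A e),
          x ⟨e, e, s⟩ * σ e e s a = a * x ⟨e, e, s⟩) := by
  classical
  have key : (∀ (e : G) (a : A e),
        catMul σ α x (catSingle (A := A) ⟨e, e, 𝟙 e⟩ a)
          = catMul σ α (catSingle (A := A) ⟨e, e, 𝟙 e⟩ a) x) ↔
      ∀ (e : G) (a : A e) (r : CMor G),
        (if h : r.1 = e then x r * σ r.1 r.2.1 r.2.2 (castRH A h.symm a) else 0)
          = (if h : r.2.1 = e then castRH A h.symm a * x r else 0) := by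
    constructor
    · intro hcomm e a r
      have h := hcomm e a
      rw [mul_single_eq σ α hα1r, single_mul_eq σ α hσ1 hα1l] at h
      have h2 := DFunLike.ext_iff.mp h r
      rw [sum_single_eval, sum_single_eval] at h2
      · exact h2
      · intro p; split <;> simp
      · intro p; split <;> simp
    · intro hpt e a
      rw [mul_single_eq σ α hα1r, single_mul_eq σ α hσ1 hα1l]
      ext r
      rw [sum_single_eval, sum_single_eval]
      · exact hpt e a r
      · intro p; split <;> simp
      · intro p; split <;> simp
  rw [key]
  constructor
  · intro hpt
    constructor
    · rintro ⟨d, c, f⟩ hp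
      have h := hpt c (1 : A c) ⟨d, c, f⟩
      rw [dif_neg hp, dif_pos rfl] at h
      simpa using h.symm
    · intro e s a
      have h := hpt e a ⟨e, e, s⟩
      rw [dif_pos rfl, dif_pos rfl] at h
      exact h
  · rintro ⟨h1, h2⟩ e a ⟨d, c, f⟩
    by_cases hd : d = e <;> by_cases hc : c = e
    · subst hd; subst hc
      rw [dif_pos rfl, dif_pos rfl]
      exact h2 _ f a
    · rw [dif_pos hd, dif_neg hc,
        h1 ⟨d, c, f⟩ (fun h => hc ((show d = c from h).symm.trans hd)), zero_mul]
    · rw [dif_neg hd, dif_pos hc,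
        h1 ⟨d, c, f⟩ (fun h => hd ((show d = c from h).trans hc)), mul_zero]
    · rw [dif_neg hd, dif_neg hc]
end

section
/- Let A ⋊_α^σ G be a groupoid crossed product with G a groupoid having finitely many objects, each A_e commutative, and such that for every morphism s, the element α(s, s⁻¹) is not a zero divisor in A_{c(s)}. Then every nonzero twosided ideal of A ⋊_α^σ G has nonzero intersection with the commutant of A in A ⋊_α^σ G. -/
open CategoryTheory

/-- `I` is a twosided ideal of the category crossed product `A ⋊_α^σ G`. -/
def IsCrossedIdeal {G : Type*} [Category G] {A : G → Type*} [∀ e, Ring (A e)]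
    (σ : ∀ e f : G, (e ⟶ f) → (A e →+* A f))
    (α : ∀ e f g : G, (f ⟶ g) → (e ⟶ f) → A g)
    (I : Set (CP A)) : Prop :=
  (0 : CP A) ∈ I ∧ (∀ x y, x ∈ I → y ∈ I → x + y ∈ I) ∧ (∀ x, x ∈ I → -x ∈ I) ∧
    ∀ x r, x ∈ I → catMul σ α r x ∈ I ∧ catMul σ α x r ∈ I


section Aux
set_option linter.unusedSectionVars false
open Classical
variable {G : Type*} [Groupoid G] {A : G → Type*} [∀ e, CommRing (A e)]
  (σ : ∀ e f : G, (e ⟶ f) → (A e →+* A f))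
  (α : ∀ e f g : G, (f ⟶ g) → (e ⟶ f) → A g)

@[simp] lemma castRH_refl {e : G} (a : A e) : castRH A rfl a = a := rfl

lemma single_congr_idx {e f : G} (m m' : e ⟶ f) (h : m = m') (c : A f) :
    (DFinsupp.single (⟨e, f, m⟩ : CMor G) c : CP A) = (DFinsupp.single (⟨e, f, m'⟩ : CMor G) c : CP A) := by
  subst h; rfl

lemma mul_single_right (x : CP A) (q0 : CMor G) (b : A q0.2.1) :
    catMul σ α x (DFinsupp.single q0 b) = ∑ p ∈ x.support,
      if h : q0.2.1 = p.1 then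
        DFinsupp.single (⟨q0.1, p.2.1, (q0.2.2 ≫ eqToHom h) ≫ p.2.2⟩ : CMor G)
          (x p * σ p.1 p.2.1 p.2.2 (castRH A h b) * α q0.1 p.1 p.2.1 p.2.2 (q0.2.2 ≫ eqToHom h))
      else 0 := by
  unfold catMul
  rw [DFinsupp.sum]
  refine Finset.sum_congr rfl fun p hp => ?_
  rw [DFinsupp.sum_single_index]
  split
  · simp
  · rfl

lemma single_mul (p0 : CMor G) (a : A p0.2.1) (y : CP A) :
    catMul σ α (DFinsupp.single p0 a) y = ∑ q ∈ y.support,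
      if h : q.2.1 = p0.1 then
        DFinsupp.single (⟨q.1, p0.2.1, (q.2.2 ≫ eqToHom h) ≫ p0.2.2⟩ : CMor G)
          (a * σ p0.1 p0.2.1 p0.2.2 (castRH A h (y q)) * α q.1 p0.1 p0.2.1 p0.2.2 (q.2.2 ≫ eqToHom h))
      else 0 := by
  unfold catMul
  rw [DFinsupp.sum_single_index]
  · rfl
  · rw [DFinsupp.sum]
    apply Finset.sum_eq_zero
    intro q hq
    split
    · simp
    · rfl

-- pointwise simplification of the right-multiplication-by-`1 u_f` summand
lemma aux1 (hα1r : ∀ (e f : G) (s : e ⟶ f), α e e f s (𝟙 e) = 1)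
    (p : CMor G) {f : G} (h : f = p.1) (c : A p.2.1) :
    DFinsupp.single (⟨f, p.2.1, ((𝟙 f) ≫ eqToHom h) ≫ p.2.2⟩ : CMor G)
      (c * σ p.1 p.2.1 p.2.2 (castRH A h 1) * α f p.1 p.2.1 p.2.2 ((𝟙 f) ≫ eqToHom h))
      = (DFinsupp.single p c : CP A) := by
  obtain ⟨p1, p2, pm⟩ := p
  dsimp at h ⊢
  subst h
  refine (single_congr_idx ((𝟙 f ≫ eqToHom rfl) ≫ pm) pm (by simp) _).trans ?_
  congr 1
  simp [hα1r]

-- pointwise simplification of the left-multiplication-by-`1 u_e` summand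
lemma aux2 (hσ1 : ∀ e : G, σ e e (𝟙 e) = RingHom.id (A e))
    (hα1l : ∀ (e f : G) (s : e ⟶ f), α e f f (𝟙 f) s = 1)
    (q : CMor G) {e : G} (h : q.2.1 = e) (b : A q.2.1) :
    DFinsupp.single (⟨q.1, e, (q.2.2 ≫ eqToHom h) ≫ (𝟙 e)⟩ : CMor G)
      ((1 : A e) * σ e e (𝟙 e) (castRH A h b) * α q.1 e e (𝟙 e) (q.2.2 ≫ eqToHom h))
      = (DFinsupp.single q b : CP A) := by
  obtain ⟨q1, q2, qm⟩ := q
  dsimp at h ⊢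
  subst h
  refine (single_congr_idx ((qm ≫ eqToHom rfl) ≫ 𝟙 q2) qm (by simp) _).trans ?_
  congr 1
  simp [hσ1, hα1l]

lemma R1_apply (hα1r : ∀ (e f : G) (s : e ⟶ f), α e e f s (𝟙 e) = 1)
    (x : CP A) (f : G) (r : CMor G) :
    catMul σ α x (DFinsupp.single (⟨f, f, 𝟙 f⟩ : CMor G) 1) r
      = if f = r.1 then x r else 0 := by
  rw [mul_single_right, DFinsupp.finset_sum_apply]
  have hterm : ∀ p : CMor G,
      (if h : f = p.1 then
        DFinsupp.single (⟨f, p.2.1, ((𝟙 f) ≫ eqToHom h) ≫ p.2.2⟩ : CMor G)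
          (x p * σ p.1 p.2.1 p.2.2 (castRH A h 1) * α f p.1 p.2.1 p.2.2 ((𝟙 f) ≫ eqToHom h))
      else 0) = if f = p.1 then (DFinsupp.single p (x p) : CP A) else 0 := by
    intro p
    split
    · rename_i h; rw [aux1 σ α hα1r p h (x p)]
    · rfl
  simp only [hterm]
  by_cases hr : r ∈ x.support
  · rw [Finset.sum_eq_single_of_mem r hr]
    · split
      · exact DFinsupp.single_eq_same
      · rfl
    · intro p hp hpr
      split
      · exact DFinsupp.single_eq_of_ne (Ne.symm hpr)
      · rfl
  · have hx : x r = 0 := by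
      by_contra h; exact hr (DFinsupp.mem_support_iff.2 h)
    rw [hx, ite_self]
    apply Finset.sum_eq_zero
    intro p hp
    split
    · exact DFinsupp.single_eq_of_ne (fun hpr => hr (hpr ▸ hp))
    · rfl

lemma L1_apply (hσ1 : ∀ e : G, σ e e (𝟙 e) = RingHom.id (A e))
    (hα1l : ∀ (e f : G) (s : e ⟶ f), α e f f (𝟙 f) s = 1)
    (y : CP A) (e : G) (r : CMor G) :
    catMul σ α (DFinsupp.single (⟨e, e, 𝟙 e⟩ : CMor G) 1) y r
      = if r.2.1 = e then y r else 0 := by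
  rw [single_mul, DFinsupp.finset_sum_apply]
  have hterm : ∀ q : CMor G,
      (if h : q.2.1 = e then
        DFinsupp.single (⟨q.1, e, (q.2.2 ≫ eqToHom h) ≫ (𝟙 e)⟩ : CMor G)
          ((1:A e) * σ e e (𝟙 e) (castRH A h (y q)) * α q.1 e e (𝟙 e) (q.2.2 ≫ eqToHom h))
      else 0) = if q.2.1 = e then (DFinsupp.single q (y q) : CP A) else 0 := by
    intro q
    split
    · rename_i h; rw [aux2 σ α hσ1 hα1l q h (y q)]
    · rfl
  simp only [hterm]
  by_cases hr : r ∈ y.support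
  · rw [Finset.sum_eq_single_of_mem r hr]
    · split
      · exact DFinsupp.single_eq_same
      · rfl
    · intro q hq hqr
      split
      · exact DFinsupp.single_eq_of_ne (Ne.symm hqr)
      · rfl
  · have hy : y r = 0 := by
      by_contra h; exact hr (DFinsupp.mem_support_iff.2 h)
    rw [hy, ite_self]
    apply Finset.sum_eq_zero
    intro q hq
    split
    · exact DFinsupp.single_eq_of_ne (fun hqr => hr (hqr ▸ hq))
    · rfl

end Aux

-- aux3: combined commutator summand
section Aux3
set_option linter.unusedSectionVars false
open Classical CategoryTheory
variable {G : Type*} [Groupoid G] {A : G → Type*} [∀ e, CommRing (A e)]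
  (σ : ∀ e f : G, (e ⟶ f) → (A e →+* A f))
  (α : ∀ e f g : G, (f ⟶ g) → (e ⟶ f) → A g)

lemma aux3 (hσ1 : ∀ e : G, σ e e (𝟙 e) = RingHom.id (A e))
    (hα1r : ∀ (e f : G) (s : e ⟶ f), α e e f s (𝟙 e) = 1)
    (hα1l : ∀ (e f : G) (s : e ⟶ f), α e f f (𝟙 f) s = 1)
    {c0 : G} (a : A c0) (p : CMor G) (hp1 : p.1 = c0) (hp2 : p.2.1 = c0) (b : A p.2.1) :
    ∃ c : A p.2.1,
      ((if h : (⟨c0, c0, 𝟙 c0⟩ : CMor G).2.1 = p.1 then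
          DFinsupp.single (⟨(⟨c0, c0, 𝟙 c0⟩ : CMor G).1, p.2.1,
              ((⟨c0, c0, 𝟙 c0⟩ : CMor G).2.2 ≫ eqToHom h) ≫ p.2.2⟩ : CMor G)
            (b * σ p.1 p.2.1 p.2.2 (castRH A h a)
              * α (⟨c0, c0, 𝟙 c0⟩ : CMor G).1 p.1 p.2.1 p.2.2
                  ((⟨c0, c0, 𝟙 c0⟩ : CMor G).2.2 ≫ eqToHom h))
        else 0)
      - (if h : p.2.1 = (⟨c0, c0, 𝟙 c0⟩ : CMor G).1 then
          DFinsupp.single (⟨p.1, (⟨c0, c0, 𝟙 c0⟩ : CMor G).2.1,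
              (p.2.2 ≫ eqToHom h) ≫ (⟨c0, c0, 𝟙 c0⟩ : CMor G).2.2⟩ : CMor G)
            (a * σ (⟨c0, c0, 𝟙 c0⟩ : CMor G).1 (⟨c0, c0, 𝟙 c0⟩ : CMor G).2.1
                (⟨c0, c0, 𝟙 c0⟩ : CMor G).2.2 (castRH A h b)
              * α p.1 (⟨c0, c0, 𝟙 c0⟩ : CMor G).1 (⟨c0, c0, 𝟙 c0⟩ : CMor G).2.1
                  (⟨c0, c0, 𝟙 c0⟩ : CMor G).2.2 (p.2.2 ≫ eqToHom h))
        else 0) : CP A) = DFinsupp.single p c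
      ∧ (p = (⟨c0, c0, 𝟙 c0⟩ : CMor G) → c = 0) := by
  obtain ⟨p1, p2, pm⟩ := p
  dsimp at hp1 hp2 ⊢
  subst hp1
  subst hp2
  refine ⟨b * σ _ _ pm a - a * b, ?_, ?_⟩
  · rw [dif_pos rfl, dif_pos rfl,
      single_congr_idx ((𝟙 _ ≫ eqToHom rfl) ≫ pm) pm (by simp),
      single_congr_idx ((pm ≫ eqToHom rfl) ≫ 𝟙 _) pm (by simp),
      ← DFinsupp.single_sub]
    congr 1
    simp [hα1r, hσ1, hα1l]
  · intro hpidc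
    have hpm : pm = 𝟙 _ := by
      simpa using hpidc
    rw [hpm, hσ1]
    simp [mul_comm]

lemma aux4 {d0 c0 p1 p2 : G} (f0 : d0 ⟶ c0) (pm : p1 ⟶ p2) (hp1 : p1 = d0) (hp2 : p2 = c0)
    (hne : (⟨p1, p2, pm⟩ : CMor G) ≠ ⟨d0, c0, f0⟩) (c : A p2) (h : d0 = p1) :
    (DFinsupp.single (⟨c0, p2, (Groupoid.inv f0 ≫ eqToHom h) ≫ pm⟩ : CMor G) c : CP A)
      ⟨c0, c0, 𝟙 c0⟩ = 0 := by
  subst hp1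
  subst hp2
  apply DFinsupp.single_eq_of_ne
  intro hcontra
  apply hne
  have hm : Groupoid.inv f0 ≫ pm = 𝟙 p2 := by
    have hm' := hcontra
    simp only [Sigma.mk.inj_iff, heq_eq_eq, true_and, eqToHom_refl, Category.comp_id,
      Category.id_comp, Category.assoc] at hm'
    simpa using hm'.symm
  have hpm : pm = f0 := by
    calc pm = 𝟙 p1 ≫ pm := (Category.id_comp pm).symm
    _ = (f0 ≫ Groupoid.inv f0) ≫ pm := by rw [Groupoid.comp_inv]
    _ = f0 ≫ (Groupoid.inv f0 ≫ pm) := by rw [Category.assoc]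
    _ = f0 ≫ 𝟙 p2 := by rw [hm]
    _ = f0 := Category.comp_id f0
  rw [hpm]

end Aux3


/-- in a groupoid crossed product `A ⋊_α^σ G` (finitely many
objects, each `A_e` commutative, each `α(s, s⁻¹)` not a zero divisor), every
nonzero twosided ideal meets the commutant of `A` nontrivially. -/
theorem ideal_meets_commutant
    {G : Type*} [Groupoid G] [Finite G] {A : G → Type*} [∀ e, CommRing (A e)]
    (σ : ∀ e f : G, (e ⟶ f) → (A e →+* A f))
    (α : ∀ e f g : G, (f ⟶ g) → (e ⟶ f) → A g)
    (hσ1 : ∀ e : G, σ e e (𝟙 e) = RingHom.id (A e))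
    (hα1r : ∀ (e f : G) (s : e ⟶ f), α e e f s (𝟙 e) = 1)
    (hα1l : ∀ (e f : G) (s : e ⟶ f), α e f f (𝟙 f) s = 1)
    (hcoc : ∀ (e f g h : G) (s : g ⟶ h) (t : f ⟶ g) (r : e ⟶ f),
      α f g h s t * α e f h (t ≫ s) r = σ g h s (α e f g t r) * α e g h s (r ≫ t))
    (htw : ∀ (e f g : G) (s : f ⟶ g) (t : e ⟶ f) (a : A e),
      σ f g s (σ e f t a) * α e f g s t = α e f g s t * σ e g (t ≫ s) a)
    (hreg : ∀ (e f : G) (s : e ⟶ f) (b : A f),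
      (α f e f s (Groupoid.inv s) * b = 0 → b = 0) ∧
        (b * α f e f s (Groupoid.inv s) = 0 → b = 0)) :
    ∀ I : Set (CP A), IsCrossedIdeal σ α I → (∃ x ∈ I, x ≠ 0) →
      ∃ x ∈ I, x ≠ 0 ∧
        ∀ (e : G) (a : A e),
          catMul σ α x (catSingle (A := A) ⟨e, e, 𝟙 e⟩ a)
            = catMul σ α (catSingle (A := A) ⟨e, e, 𝟙 e⟩ a) x := by
  classical
  intro I hI hne
  obtain ⟨x0, hx0I, hx0⟩ := hne
  suffices key : ∀ n (x : CP A), x ∈ I → x ≠ 0 → x.support.card ≤ n →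
      ∃ x ∈ I, x ≠ 0 ∧ ∀ (e : G) (a : A e),
        catMul σ α x (catSingle (A := A) ⟨e, e, 𝟙 e⟩ a)
          = catMul σ α (catSingle (A := A) ⟨e, e, 𝟙 e⟩ a) x by
    exact key x0.support.card x0 hx0I hx0 le_rfl
  intro n
  induction n using Nat.strong_induction_on with
  | _ n IH =>
  intro x hxI hx0 hcard
  have hsupp : x.support.Nonempty := by
    rw [Finset.nonempty_iff_ne_empty]
    intro h
    exact hx0 (by rwa [DFinsupp.support_eq_empty] at h)
  obtain ⟨s0, hs0⟩ := hsupp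
  obtain ⟨d0, c0, f0⟩ := s0
  have hxs0 : x ⟨d0, c0, f0⟩ ≠ 0 := DFinsupp.mem_support_iff.1 hs0
  -- the sandwich u_{c0} x u_{d0}
  set x1 : CP A := catMul σ α (DFinsupp.single (⟨c0, c0, 𝟙 c0⟩ : CMor G) 1)
      (catMul σ α x (DFinsupp.single (⟨d0, d0, 𝟙 d0⟩ : CMor G) 1)) with hx1def
  have hx1I : x1 ∈ I := (hI.2.2.2 _ _ ((hI.2.2.2 x _ hxI).2)).1
  have hx1apply : ∀ r : CMor G, x1 r =
      if r.2.1 = c0 then (if d0 = r.1 then x r else 0) else 0 := by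
    intro r
    rw [hx1def, L1_apply σ α hσ1 hα1l _ c0 r, R1_apply σ α hα1r x d0 r]
  have hx1s0 : x1 ⟨d0, c0, f0⟩ = x ⟨d0, c0, f0⟩ := by
    rw [hx1apply]; simp
  have hx1ne : x1 ≠ 0 := by
    intro h
    rw [h, DFinsupp.zero_apply] at hx1s0
    exact hxs0 hx1s0.symm
  have hx1sub : x1.support ⊆ x.support := by
    intro r hr
    rw [DFinsupp.mem_support_iff] at hr ⊢
    intro hxr
    apply hr
    rw [hx1apply, hxr]
    simp
  by_cases hss : x.support ⊆ x1.support
  swap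
  · -- strictly smaller support: recurse
    have hlt : x1.support.card < x.support.card :=
      Finset.card_lt_card (by rw [Finset.ssubset_def]; exact ⟨hx1sub, hss⟩)
    exact IH x1.support.card (lt_of_lt_of_le hlt hcard) x1 hx1I hx1ne le_rfl
  -- uniform support
  have huni : ∀ p ∈ x.support, p.1 = d0 ∧ p.2.1 = c0 := by
    intro p hp
    have hp1 : x1 p ≠ 0 := DFinsupp.mem_support_iff.1 (hss hp)
    rw [hx1apply] at hp1
    by_cases h1 : p.2.1 = c0
    · by_cases h2 : d0 = p.1
      · exact ⟨h2.symm, h1⟩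
      · rw [if_pos h1, if_neg h2] at hp1; exact absurd rfl hp1
    · rw [if_neg h1] at hp1; exact absurd rfl hp1
  -- y = x · u_{s0⁻¹}
  set y : CP A := catMul σ α x (DFinsupp.single (⟨c0, d0, Groupoid.inv f0⟩ : CMor G) 1)
    with hydef
  have hyI : y ∈ I := (hI.2.2.2 x _ hxI).2
  have hyidc : y ⟨c0, c0, 𝟙 c0⟩ = x ⟨d0, c0, f0⟩ * α c0 d0 c0 f0 (Groupoid.inv f0) := by
    rw [hydef, mul_single_right, DFinsupp.finset_sum_apply]
    refine (Finset.sum_eq_single_of_mem (⟨d0, c0, f0⟩ : CMor G) hs0 ?side).trans ?main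
    case side =>
      intro p hp hpne
      obtain ⟨hp1, hp2⟩ := huni p hp
      obtain ⟨p1, p2, pm⟩ := p
      dsimp at hp1 hp2
      rw [dif_pos hp1.symm]
      exact aux4 f0 pm hp1 hp2 hpne _ hp1.symm
    case main =>
      rw [dif_pos rfl,
        single_congr_idx ((Groupoid.inv f0 ≫ eqToHom rfl) ≫ f0) (𝟙 c0) (by simp),
        DFinsupp.single_eq_same]
      simp
  have hyidcne : y ⟨c0, c0, 𝟙 c0⟩ ≠ 0 := by
    rw [hyidc]
    intro h
    exact hxs0 ((hreg d0 c0 f0 _).2 h)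
  have hyne : y ≠ 0 := by
    intro h
    rw [h, DFinsupp.zero_apply] at hyidcne
    exact hyidcne rfl
  have hysupp : ∀ r ∈ y.support, r.1 = c0 ∧ r.2.1 = c0 := by
    intro r hr
    have hyr : y r ≠ 0 := DFinsupp.mem_support_iff.1 hr
    rw [hydef, mul_single_right, DFinsupp.finset_sum_apply] at hyr
    obtain ⟨p, hp, hpr⟩ := Finset.exists_ne_zero_of_sum_ne_zero hyr
    obtain ⟨hp1, hp2⟩ := huni p hp
    rw [dif_pos hp1.symm] at hpr
    by_cases hidx : (⟨c0, p.2.1, (Groupoid.inv f0 ≫ eqToHom hp1.symm) ≫ p.2.2⟩ : CMor G) = r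
    · constructor
      · rw [← hidx]
      · rw [← hidx]; exact hp2
    · exact absurd (DFinsupp.single_eq_of_ne (Ne.symm hidx)) hpr
  have hycard : y.support.card ≤ x.support.card := by
    have himg : y.support ⊆ x.support.image (fun p =>
        if h : d0 = p.1 then
          (⟨c0, p.2.1, (Groupoid.inv f0 ≫ eqToHom h) ≫ p.2.2⟩ : CMor G)
        else p) := by
      intro r hr
      have hyr : y r ≠ 0 := DFinsupp.mem_support_iff.1 hr
      rw [hydef, mul_single_right, DFinsupp.finset_sum_apply] at hyr
      obtain ⟨p, hp, hpr⟩ := Finset.exists_ne_zero_of_sum_ne_zero hyr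
      obtain ⟨hp1, hp2⟩ := huni p hp
      rw [Finset.mem_image]
      refine ⟨p, hp, ?_⟩
      rw [dif_pos hp1.symm] at hpr ⊢
      by_contra hidx
      exact hpr (DFinsupp.single_eq_of_ne (Ne.symm hidx))
    calc y.support.card ≤ _ := Finset.card_le_card himg
      _ ≤ x.support.card := Finset.card_image_le
  by_cases hcom : ∀ (e : G) (a : A e),
      catMul σ α y (DFinsupp.single (⟨e, e, 𝟙 e⟩ : CMor G) a)
        = catMul σ α (DFinsupp.single (⟨e, e, 𝟙 e⟩ : CMor G) a) y
  · exact ⟨y, hyI, hyne, fun e a => hcom e a⟩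
  · push_neg at hcom
    obtain ⟨e, a, hea⟩ := hcom
    have hec : e = c0 := by
      by_contra hec
      apply hea
      have h1 : catMul σ α y (DFinsupp.single (⟨e, e, 𝟙 e⟩ : CMor G) a) = 0 := by
        rw [mul_single_right]
        apply Finset.sum_eq_zero
        intro p hp
        rw [dif_neg (fun h => hec (h.trans (hysupp p hp).1))]
      have h2 : catMul σ α (DFinsupp.single (⟨e, e, 𝟙 e⟩ : CMor G) a) y = 0 := by
        rw [single_mul]
        apply Finset.sum_eq_zero
        intro q hq
        rw [dif_neg (fun h => hec (((hysupp q hq).2.symm.trans h).symm))]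
      rw [h1, h2]
    subst hec
    set z : CP A := catMul σ α y (DFinsupp.single (⟨e, e, 𝟙 e⟩ : CMor G) a)
        - catMul σ α (DFinsupp.single (⟨e, e, 𝟙 e⟩ : CMor G) a) y with hzdef
    have hzI : z ∈ I := by
      rw [hzdef, sub_eq_add_neg]
      exact hI.2.1 _ _ (hI.2.2.2 y _ hyI).2 (hI.2.2.1 _ (hI.2.2.2 y _ hyI).1)
    have hzne : z ≠ 0 := sub_ne_zero_of_ne hea
    have hzsub : z.support ⊆ y.support.erase (⟨e, e, 𝟙 e⟩ : CMor G) := by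
      intro r hr
      have hzr : z r ≠ 0 := DFinsupp.mem_support_iff.1 hr
      rw [hzdef, mul_single_right, single_mul, ← Finset.sum_sub_distrib,
        DFinsupp.finset_sum_apply] at hzr
      obtain ⟨p, hp, hpr⟩ := Finset.exists_ne_zero_of_sum_ne_zero hzr
      obtain ⟨hp1, hp2⟩ := hysupp p hp
      obtain ⟨c, hc, hcz⟩ := aux3 σ α hσ1 hα1r hα1l a p hp1 hp2 (y p)
      rw [hc] at hpr
      have hpr' : p = r := by
        by_contra hne'
        exact hpr (DFinsupp.single_eq_of_ne (Ne.symm hne'))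
      rw [Finset.mem_erase]
      constructor
      · intro hreq
        apply hpr
        rw [hcz (by rw [hpr', hreq])]
        simp
      · exact hpr' ▸ hp
    have hidcmem : (⟨e, e, 𝟙 e⟩ : CMor G) ∈ y.support :=
      DFinsupp.mem_support_iff.2 hyidcne
    have hzcard : z.support.card < x.support.card :=
      calc z.support.card ≤ (y.support.erase (⟨e, e, 𝟙 e⟩ : CMor G)).card :=
            Finset.card_le_card hzsub
        _ < y.support.card := Finset.card_erase_lt_of_mem hidcmem
        _ ≤ x.support.card := hycard
    exact IH z.support.card (lt_of_lt_of_le hzcard hcard) z hzI hzne le_rfl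
end

section
/- Let A ⋊_α^σ G be a groupoid crossed product (G a groupoid with finitely many objects) such that each α(s,t) lies in the center of A_{c(s)} and is not a zero divisor. Let N = ∪_e N_e be a normal subgroupoid of G (N_e a subgroup of G_e with s N_{d(s)} = N_{c(s)} s for all s) such that σ_n = id_{A_{c(n)}} for all n ∈ N and α(s,t) = 1_{A_{c(s)}} whenever s ∈ N or t ∈ N. If I is the twosided ideal of A ⋊_α^σ G generated by an element Σ_{s∈G} a_s u_s with a_s = 0 whenever s ∉ ∪_e N_e and Σ_{s∈N_e} a_s = 0 for every object e, then A ∩ I = {0}. -/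
open CategoryTheory

namespace CPaux

variable {G : Type*} [Groupoid G] {A : G → Type*} [∀ e, Ring (A e)]

/-- The coset-sum `Σ_{n ∈ N e} z_{n ≫ u}`. -/
noncomputable def Scoef (N : ∀ e : G, Set (e ⟶ e)) (z : CP A) (e f : G) (u : e ⟶ f) : A f :=
  ∑ᶠ n ∈ N e, z ⟨e, f, n ≫ u⟩

open Classical

lemma supp_fin (z : CP A) (e f : G) (u : e ⟶ f) :
    (Function.support (M := A f) fun n : e ⟶ e => z ⟨e, f, n ≫ u⟩).Finite := by
  have hinj : Function.Injective (fun n : e ⟶ e => (⟨e, f, n ≫ u⟩ : CMor G)) := by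
    intro n m h
    injection h with h1 h2
    injection h2 with h3 h4
    have h5 : n ≫ u = m ≫ u := by first | exact h4 | exact eq_of_heq h4
    simpa using congrArg (· ≫ Groupoid.inv u) h5
  have hsub : (Function.support (M := A f) fun n : e ⟶ e => z ⟨e, f, n ≫ u⟩) ⊆
      (fun n : e ⟶ e => (⟨e, f, n ≫ u⟩ : CMor G)) ⁻¹' ↑z.support := by
    intro n hn; simpa using hn
  exact Set.Finite.subset (Set.Finite.preimage hinj.injOn z.support.finite_toSet) hsub

lemma Scoef_add (N : ∀ e : G, Set (e ⟶ e)) (y z : CP A) (e f : G) (u : e ⟶ f) :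
    Scoef N (y + z) e f u = Scoef N y e f u + Scoef N z e f u := by
  unfold Scoef
  have : ∀ n ∈ N e, (y + z) (⟨e, f, n ≫ u⟩ : CMor G)
      = y ⟨e, f, n ≫ u⟩ + z ⟨e, f, n ≫ u⟩ := by intro n _; simp
  rw [finsum_mem_congr rfl this]
  exact finsum_mem_add_distrib'
    ((supp_fin y e f u).inter_of_right _) ((supp_fin z e f u).inter_of_right _)

lemma Scoef_zero (N : ∀ e : G, Set (e ⟶ e)) (e f : G) (u : e ⟶ f) :
    Scoef N (0 : CP A) e f u = 0 := by
  unfold Scoef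
  apply finsum_mem_eq_zero_of_forall_eq_zero
  intro n _; simp

/-- `Scoef` bundled as an additive monoid hom. -/
noncomputable def ScoefHom (N : ∀ e : G, Set (e ⟶ e)) (e f : G) (u : e ⟶ f) :
    CP A →+ A f :=
  AddMonoidHom.mk' (fun z => Scoef N z e f u) (fun y z => Scoef_add N y z e f u)

@[simp] lemma ScoefHom_apply (N : ∀ e : G, Set (e ⟶ e)) (e f : G) (u : e ⟶ f) (z : CP A) :
    ScoefHom N e f u z = Scoef N z e f u := rfl

lemma Scoef_single_ne (N : ∀ e : G, Set (e ⟶ e)) {e₁ f₁ : G} (w : e₁ ⟶ f₁) (c : A f₁)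
    {e f : G} (u : e ⟶ f) (h : ¬(e₁ = e ∧ f₁ = f)) :
    Scoef N (DFinsupp.single (⟨e₁, f₁, w⟩ : CMor G) c) e f u = 0 := by
  unfold Scoef
  apply finsum_mem_eq_zero_of_forall_eq_zero
  intro n _
  rw [DFinsupp.single_apply, dif_neg]
  intro hEq
  injection hEq with h1 h2
  subst h1
  injection eq_of_heq h2 with h3 h4
  exact h ⟨rfl, h3⟩

lemma Scoef_single_same (N : ∀ e : G, Set (e ⟶ e)) {e f : G} (w : e ⟶ f) (c : A f)
    (u : e ⟶ f) :
    Scoef N (DFinsupp.single (⟨e, f, w⟩ : CMor G) c) e f u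
      = if w ≫ Groupoid.inv u ∈ N e then c else 0 := by
  unfold Scoef
  have hterm : ∀ n ∈ N e, (DFinsupp.single (⟨e, f, w⟩ : CMor G) c : CP A) ⟨e, f, n ≫ u⟩
      = if n = w ≫ Groupoid.inv u then c else 0 := by
    intro n _
    by_cases hn : n = w ≫ Groupoid.inv u
    · subst hn
      rw [if_pos rfl]
      rw [show (w ≫ Groupoid.inv u) ≫ u = w by simp]
      exact DFinsupp.single_eq_same
    · rw [if_neg hn, DFinsupp.single_apply, dif_neg]
      intro hEq
      apply hn
      injection hEq with h1 h2
      injection h2 with h3 h4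
      have h5 : w = n ≫ u := by first | exact h4 | exact eq_of_heq h4
      rw [h5]
      simp
  rw [finsum_mem_congr rfl hterm, finsum_mem_def]
  rw [finsum_eq_single _ (w ≫ Groupoid.inv u) (by
    intro x hx
    simp only [Set.indicator_apply, if_neg hx, ite_self])]
  simp [Set.indicator_apply]


section alg
variable (σ : ∀ e f : G, (e ⟶ f) → (A e →+* A f))
variable (α : ∀ e f g : G, (f ⟶ g) → (e ⟶ f) → A g)
variable (N : ∀ e : G, Set (e ⟶ e))
variable (hcoc : ∀ (e f g h : G) (s : g ⟶ h) (t : f ⟶ g) (r : e ⟶ f),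
      α f g h s t * α e f h (t ≫ s) r = σ g h s (α e f g t r) * α e g h s (r ≫ t))
variable (htw : ∀ (e f g : G) (s : f ⟶ g) (t : e ⟶ f) (a : A e),
      σ f g s (σ e f t a) * α e f g s t = α e f g s t * σ e g (t ≫ s) a)
variable (hσN : ∀ (e : G) (n : e ⟶ e), n ∈ N e → σ e e n = RingHom.id (A e))
variable (hαNl : ∀ (e f : G) (s : e ⟶ f) (n : e ⟶ e), n ∈ N e → α e e f s n = 1)
variable (hαNr : ∀ (e f : G) (t : e ⟶ f) (n : f ⟶ f), n ∈ N f → α e f f n t = 1)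

include hcoc hαNl in
/-- `α(s, tn) = α(s, t)` for `n ∈ N`. -/
lemma alpha_comp_N {e f g : G} (s : f ⟶ g) (t : e ⟶ f) (n : e ⟶ e) (hn : n ∈ N e) :
    α e f g s (n ≫ t) = α e f g s t := by
  have h := hcoc e e f g s t n
  rw [hαNl e g (t ≫ s) n hn, hαNl e f t n hn, mul_one, map_one, one_mul] at h
  exact h.symm

include htw hσN hαNl in
/-- `σ_{vn} = σ_v` for `n ∈ N`. -/
lemma sigma_comp_N {e f : G} (v : e ⟶ f) (n : e ⟶ e) (hn : n ∈ N e) (b : A e) :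
    σ e f (n ≫ v) b = σ e f v b := by
  have h := htw e e f v n b
  rw [hσN e n hn, hαNl e f v n hn, mul_one, one_mul] at h
  simpa using h.symm

variable (hNnormal : ∀ (e f : G) (s : e ⟶ f),
      (∀ n ∈ N e, ∃ m ∈ N f, n ≫ s = s ≫ m) ∧
        (∀ m ∈ N f, ∃ n ∈ N e, s ≫ m = n ≫ s))

include hNnormal in
lemma conj_mem_iff {e f : G} (t : e ⟶ f) (n : f ⟶ f) :
    t ≫ n ≫ Groupoid.inv t ∈ N e ↔ n ∈ N f := by
  constructor
  · intro hm
    obtain ⟨m', hm', hEq⟩ := (hNnormal e f t).1 _ hm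
    have : n = m' := by
      have := congrArg (fun w => Groupoid.inv t ≫ w) hEq
      simpa using this
    rwa [this]
  · intro hn
    obtain ⟨n', hn', hEq⟩ := (hNnormal e f t).2 n hn
    have : t ≫ n ≫ Groupoid.inv t = n' := by
      have := congrArg (fun w => w ≫ Groupoid.inv t) hEq
      simp only [Category.assoc] at this
      simpa using this
    rwa [this]

include hcoc hαNl hαNr hNnormal in
/-- `α(vn, t) = α(v, t)` for `n ∈ N`, where composability forces the shape below. -/
lemma alpha_N_comp {e f g : G} (v : f ⟶ g) (t : e ⟶ f) (n : f ⟶ f) (hn : n ∈ N f) :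
    α e f g (n ≫ v) t = α e f g v t := by
  have h := hcoc e f f g v n t
  rw [hαNl f g v n hn, one_mul, hαNr e f t n hn, map_one, one_mul] at h
  rw [h]
  have ht : t ≫ n = (t ≫ n ≫ Groupoid.inv t) ≫ t := by simp
  rw [ht]
  exact alpha_comp_N σ α N hcoc hαNl v t _ ((conj_mem_iff N hNnormal t n).2 hn)


@[simp] lemma castRH_rfl (e : G) : castRH A (rfl : e = e) = RingHom.id (A e) := rfl

open Classical in
include hcoc hαNl in
lemma key_left (z : CP A) (hz : ∀ (e' f' : G) (v : e' ⟶ f'), Scoef N z e' f' v = 0)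
    (f₂ g₂ : G) (s : f₂ ⟶ g₂) (a : A g₂) (e f : G) (u : e ⟶ f) :
    (∑ q ∈ z.support, if h : q.2.1 = f₂ then
        Scoef N (DFinsupp.single (⟨q.1, g₂, (q.2.2 ≫ eqToHom h) ≫ s⟩ : CMor G)
          (a * σ f₂ g₂ s (castRH A h (z q)) * α q.1 f₂ g₂ s (q.2.2 ≫ eqToHom h))) e f u
      else (0 : A f)) = 0 := by
  by_cases hg : g₂ = f
  case neg =>
    apply Finset.sum_eq_zero
    intro q _
    by_cases hq1 : q.2.1 = f₂
    · rw [dif_pos hq1]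
      exact Scoef_single_ne N _ _ u (fun hc => hg hc.2)
    · rw [dif_neg hq1]
  case pos =>
    subst hg
    set v : e ⟶ f₂ := u ≫ Groupoid.inv s with hv
    set hfun : CMor G → A g₂ := fun q =>
      if h : q.2.1 = f₂ then
        Scoef N (DFinsupp.single (⟨q.1, g₂, (q.2.2 ≫ eqToHom h) ≫ s⟩ : CMor G)
          (a * σ f₂ g₂ s (castRH A h (z q)) * α q.1 f₂ g₂ s (q.2.2 ≫ eqToHom h))) e g₂ u
      else (0 : A g₂) with hfun_def
    have h0 : ∀ q, q ∉ z.support → hfun q = 0 := by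
      intro q hq
      have hzq : z q = 0 := by
        by_contra hc
        exact hq (DFinsupp.mem_support_iff.2 hc)
      simp only [hfun_def]
      by_cases hq1 : q.2.1 = f₂
      · rw [dif_pos hq1, hzq]
        simp [Scoef_zero]
      · rw [dif_neg hq1]
    have hstep1 : (∑ q ∈ z.support, hfun q) = ∑ᶠ q, hfun q := by
      refine (finsum_eq_sum_of_support_subset _ ?_).symm
      intro q hq
      by_contra hc
      exact hq (h0 q hc)
    set gmap : (e ⟶ e) → CMor G := fun n => ⟨e, f₂, n ≫ v⟩ with hgmap
    have hginj : Function.Injective gmap := by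
      intro n m h
      injection h with h1 h2
      injection h2 with h3 h4
      have h5 : n ≫ v = m ≫ v := by first | exact h4 | exact eq_of_heq h4
      simpa using congrArg (· ≫ Groupoid.inv v) h5
    have hsupp : ∀ q, hfun q ≠ 0 → q ∈ Set.range gmap := by
      rintro ⟨e₁, f₁, τ⟩ hq
      have hq1 : f₁ = f₂ := by
        by_contra hc
        exact hq (dif_neg hc)
      subst hq1
      have hq2 : e₁ = e := by
        by_contra hc
        refine hq ?_
        simp only [hfun_def]
        rw [dif_pos trivial]
        exact Scoef_single_ne N _ _ u (fun hcc => hc hcc.1)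
      subst hq2
      refine ⟨τ ≫ Groupoid.inv v, ?_⟩
      show (⟨e₁, f₁, (τ ≫ Groupoid.inv v) ≫ v⟩ : CMor G) = ⟨e₁, f₁, τ⟩
      rw [show (τ ≫ Groupoid.inv v) ≫ v = τ by simp]
    have hstep2 : ∑ᶠ q, hfun q = ∑ᶠ q ∈ Set.range gmap, hfun q := by
      rw [← finsum_mem_univ]
      exact finsum_mem_inter_support_eq' _ _ _
        (fun q hq => iff_of_true trivial (hsupp q hq))
    have hstep3 : ∑ᶠ q ∈ Set.range gmap, hfun q = ∑ᶠ n, hfun (gmap n) :=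
      finsum_mem_range hginj
    set φ : A f₂ →+ A g₂ :=
      ((AddMonoidHom.mulRight (α e f₂ g₂ s v)).comp
        ((AddMonoidHom.mulLeft a).comp (σ f₂ g₂ s).toAddMonoidHom)) with hφ
    set zfun : (e ⟶ e) → A f₂ := fun n => z ⟨e, f₂, n ≫ v⟩ with hzfun
    have hform : ∀ n : e ⟶ e, hfun (gmap n)
        = Set.indicator (N e) (fun n => φ (zfun n)) n := by
      intro n
      simp only [hfun_def, hgmap]
      rw [dif_pos trivial]
      simp only [eqToHom_refl, Category.comp_id, castRH_rfl, RingHom.id_apply]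
      rw [Scoef_single_same]
      rw [show (((n ≫ v) ≫ 𝟙 f₂) ≫ s) ≫ Groupoid.inv u = n by
        rw [hv]; simp]
      by_cases hn : n ∈ N e
      · rw [if_pos hn, Set.indicator_of_mem hn,
          alpha_comp_N σ α N hcoc hαNl s v n hn]
        rfl
      · rw [if_neg hn, Set.indicator_of_notMem hn]
    have hfin : (Function.support (Set.indicator (N e) zfun)).Finite := by
      rw [Set.support_indicator]
      exact Set.Finite.inter_of_right (supp_fin z e f₂ v) _
    calc (∑ q ∈ z.support, hfun q) = ∑ᶠ n, hfun (gmap n) := by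
          rw [hstep1, hstep2, hstep3]
      _ = ∑ᶠ n, φ (Set.indicator (N e) zfun n) := by
          refine finsum_congr fun n => ?_
          rw [hform n]
          exact congrFun (Set.indicator_comp_of_zero (map_zero φ)) n
      _ = φ (∑ᶠ n, Set.indicator (N e) zfun n) :=
          (AddMonoidHom.map_finsum φ hfin).symm
      _ = φ (Scoef N z e f₂ v) := by rw [Scoef, finsum_mem_def]
      _ = 0 := by rw [hz e f₂ v, map_zero]


open Classical in
include hcoc htw hσN hαNl hαNr hNnormal in
lemma key_right (z : CP A) (hz : ∀ (e' f' : G) (v : e' ⟶ f'), Scoef N z e' f' v = 0)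
    (e₀ f₀ : G) (t₀ : e₀ ⟶ f₀) (b : A f₀) (e f : G) (u : e ⟶ f) :
    (∑ p ∈ z.support, if h : f₀ = p.1 then
        Scoef N (DFinsupp.single (⟨e₀, p.2.1, (t₀ ≫ eqToHom h) ≫ p.2.2⟩ : CMor G)
          (z p * σ p.1 p.2.1 p.2.2 (castRH A h b) * α e₀ p.1 p.2.1 p.2.2 (t₀ ≫ eqToHom h))) e f u
      else (0 : A f)) = 0 := by
  by_cases he : e₀ = e
  case neg =>
    apply Finset.sum_eq_zero
    intro p _
    by_cases hp1 : f₀ = p.1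
    · rw [dif_pos hp1]
      exact Scoef_single_ne N _ _ u (fun hc => he hc.1)
    · rw [dif_neg hp1]
  case pos =>
    subst he
    set v : f₀ ⟶ f := Groupoid.inv t₀ ≫ u with hv
    set hfun : CMor G → A f := fun p =>
      if h : f₀ = p.1 then
        Scoef N (DFinsupp.single (⟨e₀, p.2.1, (t₀ ≫ eqToHom h) ≫ p.2.2⟩ : CMor G)
          (z p * σ p.1 p.2.1 p.2.2 (castRH A h b) * α e₀ p.1 p.2.1 p.2.2 (t₀ ≫ eqToHom h))) e₀ f u
      else (0 : A f) with hfun_def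
    have h0 : ∀ p, p ∉ z.support → hfun p = 0 := by
      intro p hp
      have hzp : z p = 0 := by
        by_contra hc
        exact hp (DFinsupp.mem_support_iff.2 hc)
      simp only [hfun_def]
      by_cases hp1 : f₀ = p.1
      · rw [dif_pos hp1, hzp]
        simp [Scoef_zero]
      · rw [dif_neg hp1]
    have hstep1 : (∑ p ∈ z.support, hfun p) = ∑ᶠ p, hfun p := by
      refine (finsum_eq_sum_of_support_subset _ ?_).symm
      intro p hp
      by_contra hc
      exact hp (h0 p hc)
    set gmap : (f₀ ⟶ f₀) → CMor G := fun n => ⟨f₀, f, n ≫ v⟩ with hgmap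
    have hginj : Function.Injective gmap := by
      intro n m h
      injection h with h1 h2
      injection h2 with h3 h4
      have h5 : n ≫ v = m ≫ v := by first | exact h4 | exact eq_of_heq h4
      simpa using congrArg (· ≫ Groupoid.inv v) h5
    have hsupp : ∀ p, hfun p ≠ 0 → p ∈ Set.range gmap := by
      rintro ⟨f₁, g₁, τ⟩ hq
      have hq1 : f₀ = f₁ := by
        by_contra hc
        exact hq (dif_neg hc)
      subst hq1
      have hq2 : g₁ = f := by
        by_contra hc
        refine hq ?_
        simp only [hfun_def]
        rw [dif_pos trivial]
        exact Scoef_single_ne N _ _ u (fun hcc => hc hcc.2)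
      subst hq2
      refine ⟨τ ≫ Groupoid.inv v, ?_⟩
      show (⟨f₀, g₁, (τ ≫ Groupoid.inv v) ≫ v⟩ : CMor G) = ⟨f₀, g₁, τ⟩
      rw [show (τ ≫ Groupoid.inv v) ≫ v = τ by simp]
    have hstep2 : ∑ᶠ p, hfun p = ∑ᶠ p ∈ Set.range gmap, hfun p := by
      rw [← finsum_mem_univ]
      exact finsum_mem_inter_support_eq' _ _ _
        (fun p hp => iff_of_true trivial (hsupp p hp))
    have hstep3 : ∑ᶠ p ∈ Set.range gmap, hfun p = ∑ᶠ n, hfun (gmap n) :=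
      finsum_mem_range hginj
    set φ : A f →+ A f :=
      AddMonoidHom.mulRight (σ f₀ f v b * α e₀ f₀ f v t₀) with hφ
    set zfun : (f₀ ⟶ f₀) → A f := fun n => z ⟨f₀, f, n ≫ v⟩ with hzfun
    have hform : ∀ n : f₀ ⟶ f₀, hfun (gmap n)
        = Set.indicator (N f₀) (fun n => φ (zfun n)) n := by
      intro n
      simp only [hfun_def, hgmap]
      rw [dif_pos trivial]
      simp only [eqToHom_refl, Category.comp_id, castRH_rfl, RingHom.id_apply]
      rw [Scoef_single_same]
      rw [show ((t₀ ≫ 𝟙 f₀) ≫ n ≫ v) ≫ Groupoid.inv u = t₀ ≫ n ≫ Groupoid.inv t₀ by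
        rw [hv]; simp]
      rw [conj_mem_iff N hNnormal t₀ n]
      by_cases hn : n ∈ N f₀
      · rw [if_pos hn, Set.indicator_of_mem hn,
          sigma_comp_N σ α N htw hσN hαNl v n hn b,
          alpha_N_comp σ α N hcoc hαNl hαNr hNnormal v t₀ n hn,
          mul_assoc]
        rfl
      · rw [if_neg hn, Set.indicator_of_notMem hn]
    have hfin : (Function.support (Set.indicator (N f₀) zfun)).Finite := by
      rw [Set.support_indicator]
      exact Set.Finite.inter_of_right (supp_fin z f₀ f v) _
    calc (∑ p ∈ z.support, hfun p) = ∑ᶠ n, hfun (gmap n) := by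
          rw [hstep1, hstep2, hstep3]
      _ = ∑ᶠ n, φ (Set.indicator (N f₀) zfun n) := by
          refine finsum_congr fun n => ?_
          rw [hform n]
          exact congrFun (Set.indicator_comp_of_zero (map_zero φ)) n
      _ = φ (∑ᶠ n, Set.indicator (N f₀) zfun n) :=
          (AddMonoidHom.map_finsum φ hfin).symm
      _ = φ (Scoef N z f₀ f v) := by rw [Scoef, finsum_mem_def]
      _ = 0 := by rw [hz f₀ f v, map_zero]

end alg
end CPaux

/-- let `A ⋊_α^σ G` be a groupoid crossed product with each
`α(s,t)` central and not a zero divisor, and let `N = ∪_e N_e` be a normal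
subgroupoid with `σ_n = id` for `n ∈ N` and `α(s,t) = 1` whenever `s ∈ N` or
`t ∈ N`. If `I` is the twosided ideal generated by an element `Σ a_s u_s` with
`a_s = 0` for `s ∉ ∪_e N_e` and `Σ_{s ∈ N_e} a_s = 0` for every `e`, then
`A ∩ I = {0}`. -/
theorem normal_subgroupoid_ideal_trivial_intersection
    {G : Type*} [Groupoid G] [Finite G] {A : G → Type*} [∀ e, Ring (A e)]
    (σ : ∀ e f : G, (e ⟶ f) → (A e →+* A f))
    (α : ∀ e f g : G, (f ⟶ g) → (e ⟶ f) → A g)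
    (hσ1 : ∀ e : G, σ e e (𝟙 e) = RingHom.id (A e))
    (hα1r : ∀ (e f : G) (s : e ⟶ f), α e e f s (𝟙 e) = 1)
    (hα1l : ∀ (e f : G) (s : e ⟶ f), α e f f (𝟙 f) s = 1)
    (hcoc : ∀ (e f g h : G) (s : g ⟶ h) (t : f ⟶ g) (r : e ⟶ f),
      α f g h s t * α e f h (t ≫ s) r = σ g h s (α e f g t r) * α e g h s (r ≫ t))
    (htw : ∀ (e f g : G) (s : f ⟶ g) (t : e ⟶ f) (a : A e),
      σ f g s (σ e f t a) * α e f g s t = α e f g s t * σ e g (t ≫ s) a)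
    (hcent : ∀ (e f g : G) (s : f ⟶ g) (t : e ⟶ f) (b : A g),
      α e f g s t * b = b * α e f g s t)
    (hreg : ∀ (e f g : G) (s : f ⟶ g) (t : e ⟶ f) (b : A g),
      (α e f g s t * b = 0 → b = 0) ∧ (b * α e f g s t = 0 → b = 0))
    (N : ∀ e : G, Set (e ⟶ e))
    (hNone : ∀ e : G, 𝟙 e ∈ N e)
    (hNmul : ∀ (e : G) (n m : e ⟶ e), n ∈ N e → m ∈ N e → n ≫ m ∈ N e)
    (hNinv : ∀ (e : G) (n : e ⟶ e), n ∈ N e → Groupoid.inv n ∈ N e)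
    (hNnormal : ∀ (e f : G) (s : e ⟶ f),
      (∀ n ∈ N e, ∃ m ∈ N f, n ≫ s = s ≫ m) ∧
        (∀ m ∈ N f, ∃ n ∈ N e, s ≫ m = n ≫ s))
    (hσN : ∀ (e : G) (n : e ⟶ e), n ∈ N e → σ e e n = RingHom.id (A e))
    (hαNl : ∀ (e f : G) (s : e ⟶ f) (n : e ⟶ e), n ∈ N e → α e e f s n = 1)
    (hαNr : ∀ (e f : G) (t : e ⟶ f) (n : f ⟶ f), n ∈ N f → α e f f n t = 1)
    (I : Set (CP A)) (x : CP A)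
    (hI : IsCrossedIdeal σ α I) (hxI : x ∈ I)
    (hImin : ∀ J : Set (CP A), IsCrossedIdeal σ α J → x ∈ J → I ⊆ J)
    (hsupp : ∀ p : CMor G, x p ≠ 0 →
      ∃ h : p.1 = p.2.1, p.2.2 ≫ eqToHom h.symm ∈ N p.1)
    (hsum : ∀ e : G, (∑ᶠ (s : e ⟶ e) (_ : s ∈ N e), x ⟨e, e, s⟩) = 0) :
    ∀ y ∈ I, (∀ p : CMor G, (∀ e : G, p ≠ ⟨e, e, 𝟙 e⟩) → y p = 0) → y = 0 := by
  classical
  set J : Set (CP A) := {z | ∀ (e f : G) (u : e ⟶ f), CPaux.Scoef N z e f u = 0} with hJ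
  -- J is closed under the crossed product operations
  have hJmul : ∀ z ∈ J, ∀ r : CP A, catMul σ α r z ∈ J ∧ catMul σ α z r ∈ J := by
    intro z hz r
    constructor
    · intro e f u
      show CPaux.Scoef N
        (DFinsupp.sum r fun p a => DFinsupp.sum z fun q b =>
          if h : q.2.1 = p.1 then
            DFinsupp.single (⟨q.1, p.2.1, (q.2.2 ≫ eqToHom h) ≫ p.2.2⟩ : CMor G)
              (a * σ p.1 p.2.1 p.2.2 (castRH A h b) * α q.1 p.1 p.2.1 p.2.2 (q.2.2 ≫ eqToHom h))
          else 0) e f u = 0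
      rw [DFinsupp.sum, ← CPaux.ScoefHom_apply (A := A) N e f u, map_sum]
      refine Finset.sum_eq_zero fun p _ => ?_
      rw [CPaux.ScoefHom_apply]
      show CPaux.Scoef N (DFinsupp.sum z fun q b =>
          if h : q.2.1 = p.1 then
            DFinsupp.single (⟨q.1, p.2.1, (q.2.2 ≫ eqToHom h) ≫ p.2.2⟩ : CMor G)
              ((r p) * σ p.1 p.2.1 p.2.2 (castRH A h b)
                * α q.1 p.1 p.2.1 p.2.2 (q.2.2 ≫ eqToHom h))
          else 0) e f u = 0
      rw [DFinsupp.sum, ← CPaux.ScoefHom_apply (A := A) N e f u, map_sum]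
      refine Eq.trans (Finset.sum_congr rfl fun q _ => ?_)
        (CPaux.key_left σ α N hcoc hαNl z hz p.1 p.2.1 p.2.2 (r p) e f u)
      show CPaux.ScoefHom (A := A) N e f u
          (if h : q.2.1 = p.1 then
            DFinsupp.single (⟨q.1, p.2.1, (q.2.2 ≫ eqToHom h) ≫ p.2.2⟩ : CMor G)
              ((r p) * σ p.1 p.2.1 p.2.2 (castRH A h (z q))
                * α q.1 p.1 p.2.1 p.2.2 (q.2.2 ≫ eqToHom h))
          else 0) = _
      rw [apply_dite (CPaux.ScoefHom (A := A) N e f u)]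
      simp only [map_zero, CPaux.ScoefHom_apply]
    · intro e f u
      show CPaux.Scoef N
        (DFinsupp.sum z fun p a => DFinsupp.sum r fun q b =>
          if h : q.2.1 = p.1 then
            DFinsupp.single (⟨q.1, p.2.1, (q.2.2 ≫ eqToHom h) ≫ p.2.2⟩ : CMor G)
              (a * σ p.1 p.2.1 p.2.2 (castRH A h b) * α q.1 p.1 p.2.1 p.2.2 (q.2.2 ≫ eqToHom h))
          else 0) e f u = 0
      rw [DFinsupp.sum, ← CPaux.ScoefHom_apply (A := A) N e f u, map_sum]
      simp only [DFinsupp.sum, map_sum]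
      rw [Finset.sum_comm]
      refine Finset.sum_eq_zero fun q _ => ?_
      refine Eq.trans (Finset.sum_congr rfl fun p _ => ?_)
        (CPaux.key_right σ α N hcoc htw hσN hαNl hαNr hNnormal z hz q.1 q.2.1 q.2.2 (r q) e f u)
      rw [apply_dite (CPaux.ScoefHom (A := A) N e f u)]
      simp only [map_zero, CPaux.ScoefHom_apply]
  have hJideal : IsCrossedIdeal σ α J := by
    refine ⟨?_, ?_, ?_, ?_⟩
    · intro e f u; exact CPaux.Scoef_zero N e f u
    · intro z w hzJ hwJ e f u
      rw [CPaux.Scoef_add, hzJ e f u, hwJ e f u, add_zero]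
    · intro z hzJ e f u
      have := map_neg (CPaux.ScoefHom (A := A) N e f u) z
      simp only [CPaux.ScoefHom_apply] at this
      rw [this, hzJ e f u, neg_zero]
    · intro z r hzJ
      exact hJmul z hzJ r
  -- x belongs to J
  have hxJ : x ∈ J := by
    intro e f u
    by_cases hef : e = f
    · subst hef
      by_cases hu : u ∈ N e
      · have himg : (fun n : e ⟶ e => n ≫ u) '' (N e) = N e := by
          ext m
          constructor
          · rintro ⟨n, hn, rfl⟩
            exact hNmul e n u hn hu
          · intro hm
            refine ⟨m ≫ Groupoid.inv u, hNmul e m _ hm (hNinv e u hu), by simp⟩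
        have hinj : Set.InjOn (fun n : e ⟶ e => n ≫ u) (N e) := by
          intro n _ m _ h
          simpa using congrArg (· ≫ Groupoid.inv u) h
        calc CPaux.Scoef N x e e u
            = ∑ᶠ m ∈ (fun n : e ⟶ e => n ≫ u) '' (N e), x ⟨e, e, m⟩ := by
              rw [CPaux.Scoef, finsum_mem_image hinj]
          _ = ∑ᶠ m ∈ N e, x ⟨e, e, m⟩ := by rw [himg]
          _ = 0 := hsum e
      · apply finsum_mem_eq_zero_of_forall_eq_zero
        intro n hn
        by_contra hc
        obtain ⟨h, hmem⟩ := hsupp ⟨e, e, n ≫ u⟩ hc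
        simp only [eqToHom_refl, Category.comp_id] at hmem
        apply hu
        have := hNmul e (Groupoid.inv n) (n ≫ u) (hNinv e n hn) hmem
        simpa using this
    · apply finsum_mem_eq_zero_of_forall_eq_zero
      intro n hn
      by_contra hc
      obtain ⟨h, _⟩ := hsupp ⟨e, f, n ≫ u⟩ hc
      exact hef h
  -- conclude
  intro y hyI hy0
  have hyJ : y ∈ J := hImin J hJideal hxJ hyI
  ext p
  show y p = 0
  by_cases hp : ∃ e : G, p = ⟨e, e, 𝟙 e⟩
  · obtain ⟨e, rfl⟩ := hp
    have hS := hyJ e e (𝟙 e)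
    rw [CPaux.Scoef, finsum_mem_def] at hS
    have hone : ∀ n : e ⟶ e, n ≠ 𝟙 e →
        Set.indicator (M := A e) (N e) (fun n : e ⟶ e => y ⟨e, e, n ≫ 𝟙 e⟩) n = (0 : A e) := by
      intro n hne
      by_cases hn : n ∈ N e
      · rw [Set.indicator_of_mem hn]
        rw [show n ≫ 𝟙 e = n from Category.comp_id n]
        apply hy0
        intro e' heq
        apply hne
        injection heq with h1 h2
        subst h1
        injection eq_of_heq h2 with h3 h4
      · rw [Set.indicator_of_notMem hn]
    rw [finsum_eq_single _ (𝟙 e) hone, Set.indicator_of_mem (hNone e)] at hS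
    rw [show (𝟙 e : e ⟶ e) ≫ 𝟙 e = 𝟙 e from Category.comp_id _] at hS
    exact hS
  · exact hy0 p (fun e heq => hp ⟨e, heq⟩)
end
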